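/- Let μ ∈ {0,1} and let φ ∈ H¹(ℝ²) satisfy E_μ(φ) ≥ 0 and φ ∈ 𝒦⁻_μ, i.e. φ ≠ 0, S_μ(φ) < S_μ(Q_μ) and I_μ(φ) < 0. Then I_μ(φ) ≤ 2(S_μ(φ) − S_μ(Q_μ)). -/

import Mathlib

open MeasureTheory Real Filter
open scoped Topology ENNReal

noncomputable section

abbrev E2 : Type := EuclideanSpace ℝ (Fin 2)

/-- Squared `L²` norm. -/
def l2Sq (u : E2 → ℂ) : ℝ := ∫ x : E2, ‖u x‖ ^ 2

/-- Squared `L²` norm of the gradient. -/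
def gradSq (u : E2 → ℂ) : ℝ := ∫ x : E2, ‖fderiv ℝ u x‖ ^ 2

/-- Membership in `H¹(ℝ²)`. -/
def MemH1 (u : E2 → ℂ) : Prop :=
  MemLp u 2 volume ∧ Differentiable ℝ u ∧ MemLp (fun x => fderiv ℝ u x) 2 volume

/-- Integrability of all exponentials `e^{a|u|²} - 1`. -/
def ExpIntegrable (u : E2 → ℂ) : Prop :=
  ∀ a : ℝ, 0 < a → Integrable (fun x : E2 => Real.exp (a * ‖u x‖ ^ 2) - 1)

/-- The nonlinearity `f_μ`. -/
def fmu (μ : ℝ) (z : ℂ) : ℂ :=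
  ((Real.exp (4 * π * ‖z‖ ^ 2) - 1 - 4 * π * μ * ‖z‖ ^ 2 : ℝ) : ℂ) * z

/-- The potential `F_μ`. -/
def Fmu (μ : ℝ) (z : ℂ) : ℝ :=
  (Real.exp (4 * π * ‖z‖ ^ 2) - 1 - 4 * π * ‖z‖ ^ 2 - 8 * π ^ 2 * μ * ‖z‖ ^ 4) / (8 * π)

/-- `Re (z̄ f_μ(z))`. -/
def nlDensity (μ : ℝ) (z : ℂ) : ℝ :=
  (Real.exp (4 * π * ‖z‖ ^ 2) - 1 - 4 * π * μ * ‖z‖ ^ 2) * ‖z‖ ^ 2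

/-- Energy. -/
def Emu (μ : ℝ) (u : E2 → ℂ) : ℝ := gradSq u / 2 - ∫ x : E2, Fmu μ (u x)

/-- Action. -/
def Smu (μ : ℝ) (u : E2 → ℂ) : ℝ := Emu μ u + l2Sq u / 2

/-- The functional `P_μ`. -/
def Pmu (μ : ℝ) (u : E2 → ℂ) : ℝ := l2Sq u / 2 - ∫ x : E2, Fmu μ (u x)

/-- The virial functional `I_μ`. -/
def Imu (μ : ℝ) (u : E2 → ℂ) : ℝ :=
  gradSq u - ∫ x : E2, (nlDensity μ (u x) - 2 * Fmu μ (u x))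

/-- Laplacian on `ℝ²` (sum of second directional derivatives). -/
def lap (v : E2 → ℂ) (x : E2) : ℂ :=
  ∑ i : Fin 2, fderiv ℝ (fun y => fderiv ℝ v y (EuclideanSpace.single i 1)) x
      (EuclideanSpace.single i 1)

/-- `φ` is a (pointwise) solution to the elliptic equation `-Δφ + φ = f_μ(φ)`. -/
def IsEllipticSolution (μ : ℝ) (φ : E2 → ℂ) : Prop :=
  ∀ x, -lap φ x + φ x = fmu μ (φ x)

/-- Ground state for `-ΔQ + Q = f_μ(Q)`. -/
structure IsGroundState (μ : ℝ) (Q : E2 → ℂ) : Prop where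
  mem : MemH1 Q
  expint : ExpIntegrable Q
  nonzero : ¬ Q =ᵐ[volume] (0 : E2 → ℂ)
  radial : ∀ x y : E2, ‖x‖ = ‖y‖ → Q x = Q y
  solves : IsEllipticSolution μ Q
  minimal : ∀ φ : E2 → ℂ, MemH1 φ → ExpIntegrable φ → ¬ φ =ᵐ[volume] (0 : E2 → ℂ) →
    IsEllipticSolution μ φ → Smu μ Q ≤ Smu μ φ
  grad_pos : 0 < gradSq Q
  grad_lt_one : gradSq Q < 1

lemma final_arith (g J A Fint SQ Sφ Iφ : ℝ) (hgpos : 0 < g) (hJg : g < J)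
    (hSQ : SQ ≤ g / 2 + (g / J) * (A / 2 - Fint)) (hBJ : 0 ≤ A - 2 * Fint + J)
    (hSphi : Sφ = g / 2 - Fint + A / 2) (hIphi : Iφ = g - J) :
    Iφ ≤ 2 * (Sφ - SQ) := by
  have hJpos : 0 < J := lt_trans hgpos hJg
  have hq : (g / J) * J = g := div_mul_cancel₀ g (ne_of_gt hJpos)
  have hq1 : g / J < 1 := (div_lt_one hJpos).2 hJg
  have hprod : 0 ≤ (A - 2 * Fint + J) * (1 - g / J) := mul_nonneg hBJ (by linarith)
  rw [hSphi, hIphi]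
  nlinarith [hprod, hq, hSQ]

lemma aux_deriv_nonneg (s : ℝ) : 0 ≤ (s - 1) * Real.exp s + 1 := by
  have h := Real.add_one_le_exp (-s)
  have h2 : (1 - s) * Real.exp s ≤ Real.exp (-s) * Real.exp s :=
    mul_le_mul_of_nonneg_right (by linarith) (Real.exp_pos s).le
  rw [← Real.exp_add, neg_add_cancel, Real.exp_zero] at h2
  nlinarith
lemma aux_core (s : ℝ) (hs : 0 ≤ s) : 0 ≤ (s - 2) * (Real.exp s - 1) + 2 * s := by
  set h : ℝ → ℝ := fun t => (t - 2) * (Real.exp t - 1) + 2 * t with hh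
  have hd : ∀ t : ℝ, HasDerivAt h ((t - 1) * Real.exp t + 1) t := by
    intro t
    have h1 : HasDerivAt (fun t : ℝ => (t - 2) * (Real.exp t - 1))
        (1 * (Real.exp t - 1) + (t - 2) * Real.exp t) t :=
      (((hasDerivAt_id t).sub_const 2).mul ((Real.hasDerivAt_exp t).sub_const 1))
    have h2 : HasDerivAt (fun t : ℝ => 2 * t) 2 t := by
      simpa using (hasDerivAt_id t).const_mul 2
    exact (h1.add h2).congr_deriv (by ring)
  have hmono : MonotoneOn h (Set.Ici (0:ℝ)) := by
    apply monotoneOn_of_deriv_nonneg (convex_Ici 0)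
      (Continuous.continuousOn (by continuity))
    · intro x hx
      exact (hd x).differentiableAt.differentiableWithinAt
    · intro x hx
      rw [(hd x).deriv]
      exact aux_deriv_nonneg x
  simpa [hh] using hmono (Set.self_mem_Ici) (Set.mem_Ici.2 hs) hs
lemma cubic_le_exp {x : ℝ} (hx : 0 ≤ x) : 1 + x + x ^ 2 / 2 + x ^ 3 / 6 ≤ Real.exp x := by
  have := Real.sum_le_exp_of_nonneg hx 4
  simp [Finset.sum_range_succ, Nat.factorial] at this
  linarith


section pointwise
variable {μ : ℝ}

lemma Fmu_nonneg (hμ1 : μ ≤ 1) (z : ℂ) : 0 ≤ Fmu μ z := by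
  have hπ := Real.pi_pos
  have ht : (0:ℝ) ≤ ‖z‖ ^ 2 := by positivity
  have h := cubic_le_exp (x := 4 * π * ‖z‖ ^ 2) (by positivity)
  have hcube : (0:ℝ) ≤ (4 * π * ‖z‖ ^ 2) ^ 3 / 6 := by positivity
  have h18 : (0:ℝ) ≤ (1 - μ) * (8 * π ^ 2 * ‖z‖ ^ 4) :=
    mul_nonneg (by linarith) (by positivity)
  unfold Fmu
  apply div_nonneg _ (by positivity)
  nlinarith [h, hcube, h18]

lemma Fmu_pos (hμ1 : μ ≤ 1) {z : ℂ} (hz : z ≠ 0) : 0 < Fmu μ z := by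
  have hπ := Real.pi_pos
  have ht : (0:ℝ) < ‖z‖ ^ 2 := pow_pos (norm_pos_iff.mpr hz) 2
  have h := cubic_le_exp (x := 4 * π * ‖z‖ ^ 2) (by positivity)
  have hcube : (0:ℝ) < (4 * π * ‖z‖ ^ 2) ^ 3 / 6 := by positivity
  have h18 : (0:ℝ) ≤ (1 - μ) * (8 * π ^ 2 * ‖z‖ ^ 4) :=
    mul_nonneg (by linarith) (by positivity)
  unfold Fmu
  apply div_pos _ (by positivity)
  nlinarith [h, hcube, h18]

lemma nl_nonneg (hμ1 : μ ≤ 1) (z : ℂ) : 0 ≤ nlDensity μ z := by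
  have hπ := Real.pi_pos
  have ht : (0:ℝ) ≤ ‖z‖ ^ 2 := by positivity
  have h := Real.add_one_le_exp (4 * π * ‖z‖ ^ 2)
  unfold nlDensity
  apply mul_nonneg _ ht
  nlinarith [mul_nonneg (mul_nonneg hπ.le ht) (sub_nonneg.2 hμ1)]

lemma nl_ge_4F (z : ℂ) : 4 * Fmu μ z ≤ nlDensity μ z := by
  have hπ := Real.pi_pos
  have ht : (0:ℝ) ≤ ‖z‖ ^ 2 := by positivity
  have hcore := aux_core (4 * π * ‖z‖ ^ 2) (by positivity)
  unfold Fmu nlDensity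
  rw [← mul_div_assoc, div_le_iff₀ (by positivity)]
  nlinarith [hcore]

lemma Fmu_le (hμ0 : 0 ≤ μ) (z : ℂ) :
    Fmu μ z ≤ (8 * π)⁻¹ * (Real.exp (4 * π * ‖z‖ ^ 2) - 1) := by
  have hπ := Real.pi_pos
  have ht : (0:ℝ) ≤ ‖z‖ ^ 2 := by positivity
  have h4 : (0:ℝ) ≤ ‖z‖ ^ 4 := by positivity
  unfold Fmu
  rw [inv_mul_eq_div]
  gcongr (?_ : ℝ) / _
  nlinarith [mul_nonneg (mul_nonneg (sq_nonneg π) hμ0) h4, mul_nonneg hπ.le ht]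

lemma nl_le (hμ0 : 0 ≤ μ) (z : ℂ) :
    nlDensity μ z ≤ (4 * π)⁻¹ * (Real.exp (8 * π * ‖z‖ ^ 2) - 1) := by
  have hπ := Real.pi_pos
  have ht : (0:ℝ) ≤ ‖z‖ ^ 2 := by positivity
  have h1 := Real.add_one_le_exp (4 * π * ‖z‖ ^ 2)
  have hE1 : (1:ℝ) ≤ Real.exp (4 * π * ‖z‖ ^ 2) := Real.one_le_exp (by positivity)
  have hEsq : Real.exp (4 * π * ‖z‖ ^ 2) * Real.exp (4 * π * ‖z‖ ^ 2)
      = Real.exp (8 * π * ‖z‖ ^ 2) := by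
    rw [← Real.exp_add]; ring_nf
  have step1 : nlDensity μ z ≤ (Real.exp (4 * π * ‖z‖ ^ 2) - 1) * ‖z‖ ^ 2 := by
    unfold nlDensity
    apply mul_le_mul_of_nonneg_right _ ht
    nlinarith [mul_nonneg (mul_nonneg hπ.le hμ0) ht]
  have key : (Real.exp (4 * π * ‖z‖ ^ 2) - 1) * (4 * π * ‖z‖ ^ 2)
      ≤ (Real.exp (4 * π * ‖z‖ ^ 2) - 1) * (Real.exp (4 * π * ‖z‖ ^ 2) - 1) :=
    mul_le_mul_of_nonneg_left (by linarith) (by linarith)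
  have step2 : (Real.exp (4 * π * ‖z‖ ^ 2) - 1) * ‖z‖ ^ 2
      ≤ (4 * π)⁻¹ * (Real.exp (8 * π * ‖z‖ ^ 2) - 1) := by
    rw [inv_mul_eq_div, le_div_iff₀ (by positivity)]
    nlinarith [key, hEsq, hE1]
  linarith

end pointwise

/-- if `φ ∈ 𝒦⁻_μ` has nonnegative energy, then
`I_μ(φ) ≤ 2(S_μ(φ) - S_μ(Q_μ))`. -/

theorem I_upper_bound_on_Kminus (μ : ℝ) (hμ : μ = 0 ∨ μ = 1)
    (Q : E2 → ℂ) (hQ : IsGroundState μ Q)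
    (hIchar : IsLeast {s : ℝ | ∃ ψ : E2 → ℂ, MemH1 ψ ∧ ExpIntegrable ψ ∧
        ¬ ψ =ᵐ[volume] (0 : E2 → ℂ) ∧ Imu μ ψ = 0 ∧ s = Smu μ ψ} (Smu μ Q))
    (φ : E2 → ℂ) (hφmem : MemH1 φ) (hφexp : ExpIntegrable φ)
    (hφne : ¬ φ =ᵐ[volume] (0 : E2 → ℂ))
    (hE : 0 ≤ Emu μ φ) (hS : Smu μ φ < Smu μ Q) (hI : Imu μ φ < 0) :
    Imu μ φ ≤ 2 * (Smu μ φ - Smu μ Q) := by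
  have hμ0 : 0 ≤ μ := by rcases hμ with h | h <;> simp [h]
  have hμ1 : μ ≤ 1 := by rcases hμ with h | h <;> simp [h]
  have hπ := Real.pi_pos
  have hcont : Continuous φ := hφmem.2.1.continuous
  have hFcont : Continuous fun x => Fmu μ (φ x) := by
    unfold Fmu; fun_prop
  have hnlcont : Continuous fun x => nlDensity μ (φ x) := by
    unfold nlDensity; fun_prop
  have hF_int : Integrable (fun x => Fmu μ (φ x)) := by
    apply Integrable.mono' ((hφexp (4 * π) (by positivity)).const_mul ((8 * π)⁻¹))
      hFcont.aestronglyMeasurable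
    filter_upwards with x
    rw [Real.norm_of_nonneg (Fmu_nonneg hμ1 _)]
    exact Fmu_le hμ0 _
  have hnl_int : Integrable (fun x => nlDensity μ (φ x)) := by
    apply Integrable.mono' ((hφexp (8 * π) (by positivity)).const_mul ((4 * π)⁻¹))
      hnlcont.aestronglyMeasurable
    filter_upwards with x
    rw [Real.norm_of_nonneg (nl_nonneg hμ1 _)]
    exact nl_le hμ0 _
  have hsq_int : Integrable (fun x : E2 => ‖φ x‖ ^ 2) :=
    (memLp_two_iff_integrable_sq_norm hφmem.1.aestronglyMeasurable).1 hφmem.1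
  have hgsq_int : Integrable (fun x : E2 => ‖fderiv ℝ φ x‖ ^ 2) :=
    (memLp_two_iff_integrable_sq_norm hφmem.2.2.aestronglyMeasurable).1 hφmem.2.2
  set Fint := ∫ x : E2, Fmu μ (φ x) with hFint
  set N := ∫ x : E2, nlDensity μ (φ x) with hN
  set J := ∫ x : E2, (nlDensity μ (φ x) - 2 * Fmu μ (φ x)) with hJdef
  set A := l2Sq φ with hA
  set g := gradSq φ with hg
  have hJ_split : J = N - 2 * Fint := by
    rw [hJdef, integral_sub hnl_int (hF_int.const_mul 2), integral_const_mul, hN, hFint]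
  have h4F : 4 * Fint ≤ N := by
    have h1 : (∫ x : E2, 4 * Fmu μ (φ x)) ≤ ∫ x : E2, nlDensity μ (φ x) :=
      integral_mono (hF_int.const_mul 4) hnl_int (fun x => nl_ge_4F _)
    rw [integral_const_mul] at h1
    rw [hFint, hN]; exact h1
  have hA0 : 0 ≤ A := integral_nonneg (fun x => by positivity)
  have hg0 : 0 ≤ g := integral_nonneg (fun x => by positivity)
  have hFge : 0 ≤ Fint := integral_nonneg (fun x => Fmu_nonneg hμ1 _)
  have hImu : Imu μ φ = g - J := by rw [Imu, ← hg, ← hJdef]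
  have hSφ : Smu μ φ = g / 2 - Fint + A / 2 := by
    simp only [Smu, Emu, ← hg, ← hFint, ← hA]
  have hApos : 0 < A := by
    rcases eq_or_lt_of_le hA0 with h0 | h; swap
    · exact h
    exfalso
    have := (integral_eq_zero_iff_of_nonneg (fun x : E2 => by positivity) hsq_int).1 h0.symm
    apply hφne
    filter_upwards [this] with x hx
    have : ‖φ x‖ ^ 2 = 0 := hx
    simpa [pow_eq_zero_iff] using this
  rcases eq_or_lt_of_le hg0 with hgz | hgpos
  · -- gradient is zero: contradiction with φ ≠ 0 via hE
    exfalso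
    have hEφ : 0 ≤ g / 2 - Fint := by
      have := hE; rw [Emu, ← hg, ← hFint] at this; exact this
    have hFle : Fint ≤ 0 := by rw [← hgz] at hEφ; linarith
    have hF0 : Fint = 0 := le_antisymm hFle hFge
    have hae := (integral_eq_zero_iff_of_nonneg (fun x : E2 => Fmu_nonneg hμ1 _) hF_int).1
      (by rw [← hFint]; exact hF0)
    apply hφne
    filter_upwards [hae] with x hx
    by_contra hx0
    have : (0:ℝ) < Fmu μ (φ x) := Fmu_pos hμ1 hx0
    simp only [Pi.zero_apply] at hx
    exact this.ne' hx
  · -- main case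
    have hJg : g < J := by rw [hImu] at hI; linarith
    have hJpos : 0 < J := lt_trans hgpos hJg
    set r := Real.sqrt (J / g) with hr
    have hrpos : 0 < r := Real.sqrt_pos.2 (div_pos hJpos hgpos)
    have hr0 : r ≠ 0 := ne_of_gt hrpos
    have hr2 : r ^ 2 = J / g := Real.sq_sqrt (le_of_lt (div_pos hJpos hgpos))
    have hfin : Module.finrank ℝ E2 = 2 := finrank_euclideanSpace_fin
    have hscale : ∀ f : E2 → ℝ, (∫ x : E2, f (r • x)) = (g / J) * ∫ x : E2, f x := by
      intro f
      rw [MeasureTheory.Measure.integral_comp_smul volume f r, hfin, hr2, inv_div,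
        abs_of_nonneg (div_nonneg hg0 hJpos.le), smul_eq_mul]
    set ψ : E2 → ℂ := fun x => φ (r • x) with hψ
    have hsmul_diff : Differentiable ℝ (fun x : E2 => r • x) :=
      differentiable_id.const_smul r
    have hψdiff : Differentiable ℝ ψ := hφmem.2.1.comp hsmul_diff
    have hfd : ∀ x, fderiv ℝ ψ x = r • fderiv ℝ φ (r • x) := by
      intro x
      have hcomp : fderiv ℝ ψ x
          = (fderiv ℝ φ (r • x)).comp (fderiv ℝ (fun y : E2 => r • y) x) :=
        fderiv_comp x (hφmem.2.1 _) (hsmul_diff x)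
      have hfs : fderiv ℝ (fun y : E2 => r • y) x = r • ContinuousLinearMap.id ℝ E2 := by
        have h1 : fderiv ℝ (fun y : E2 => r • id y) x = r • fderiv ℝ (id : E2 → E2) x :=
          fderiv_const_smul differentiable_id.differentiableAt r
        simpa [fderiv_id] using h1
      rw [hcomp, hfs]
      ext v
      simp [ContinuousLinearMap.comp_apply, ContinuousLinearMap.smul_apply,
        (fderiv ℝ φ (r • x)).map_smul]
    have hnormfd : (fun x : E2 => ‖fderiv ℝ ψ x‖ ^ 2)
        = fun x : E2 => r ^ 2 * ‖fderiv ℝ φ (r • x)‖ ^ 2 := by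
      funext x
      rw [hfd x, norm_smul r (fderiv ℝ φ (r • x)), Real.norm_eq_abs, abs_of_pos hrpos,
        mul_pow]
    have hsc1 : (∫ x : E2, ‖fderiv ℝ φ (r • x)‖ ^ 2) = (g / J) * g :=
      hscale (fun y : E2 => ‖fderiv ℝ φ y‖ ^ 2)
    have hsc2 : (∫ x : E2, ‖φ (r • x)‖ ^ 2) = (g / J) * A :=
      hscale (fun y : E2 => ‖φ y‖ ^ 2)
    have hsc3 : (∫ x : E2, Fmu μ (φ (r • x))) = (g / J) * Fint :=
      hscale (fun y : E2 => Fmu μ (φ y))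
    have hsc4 : (∫ x : E2, (nlDensity μ (φ (r • x)) - 2 * Fmu μ (φ (r • x))))
        = (g / J) * J :=
      hscale (fun y : E2 => nlDensity μ (φ y) - 2 * Fmu μ (φ y))
    have hgradψ : gradSq ψ = g := by
      rw [gradSq, hnormfd, integral_const_mul, hsc1, hr2]
      field_simp
    have hl2ψ : l2Sq ψ = (g / J) * A := by
      rw [l2Sq]
      show (∫ x : E2, ‖φ (r • x)‖ ^ 2) = (g / J) * A
      rw [hsc2]
    have hFψ : (∫ x : E2, Fmu μ (ψ x)) = (g / J) * Fint := by
      show (∫ x : E2, Fmu μ (φ (r • x))) = (g / J) * Fint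
      rw [hsc3]
    have hJψ : (∫ x : E2, (nlDensity μ (ψ x) - 2 * Fmu μ (ψ x))) = g := by
      show (∫ x : E2, (nlDensity μ (φ (r • x)) - 2 * Fmu μ (φ (r • x)))) = g
      rw [hsc4]
      field_simp
    have hIψ : Imu μ ψ = 0 := by
      rw [Imu, hgradψ, hJψ, sub_self]
    have hψcont : Continuous ψ := hψdiff.continuous
    have hψl2 : MemLp ψ 2 volume := by
      rw [memLp_two_iff_integrable_sq_norm hψcont.aestronglyMeasurable]
      exact (integrable_comp_smul_iff volume (fun y : E2 => ‖φ y‖ ^ 2) hr0).2 hsq_int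
    have hfd' : (fun x : E2 => fderiv ℝ ψ x) = fun x : E2 => r • fderiv ℝ φ (r • x) :=
      funext hfd
    have hψfd_mem : MemLp (fun x : E2 => fderiv ℝ ψ x) 2 volume := by
      rw [hfd']
      have hm : Measurable (fun x : E2 => r • fderiv ℝ φ (r • x)) :=
        ((measurable_fderiv ℝ φ).comp (continuous_const_smul r).measurable).const_smul r
      rw [memLp_two_iff_integrable_sq_norm hm.aestronglyMeasurable]
      have heq : (fun x : E2 => ‖r • fderiv ℝ φ (r • x)‖ ^ 2)
          = fun x : E2 => r ^ 2 * (fun y : E2 => ‖fderiv ℝ φ y‖ ^ 2) (r • x) := by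
        funext x
        rw [norm_smul r (fderiv ℝ φ (r • x)), Real.norm_eq_abs, abs_of_pos hrpos, mul_pow]
      rw [heq]
      exact ((integrable_comp_smul_iff volume
        (fun y : E2 => ‖fderiv ℝ φ y‖ ^ 2) hr0).2 hgsq_int).const_mul _
    have hψexp : ExpIntegrable ψ := by
      intro a ha
      exact (integrable_comp_smul_iff volume
        (fun y : E2 => Real.exp (a * ‖φ y‖ ^ 2) - 1) hr0).2 (hφexp a ha)
    have hψne : ¬ ψ =ᵐ[volume] (0 : E2 → ℂ) := by
      intro h0
      have hz : l2Sq ψ = 0 := by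
        rw [l2Sq]
        rw [integral_congr_ae (g := fun _ : E2 => (0:ℝ)) ?_, integral_zero]
        filter_upwards [h0] with x hx
        simp [hx]
      rw [hl2ψ] at hz
      have : g / J ≠ 0 := ne_of_gt (div_pos hgpos hJpos)
      have hA0' : A = 0 := by
        rcases mul_eq_zero.1 hz with h | h
        · exact absurd h this
        · exact h
      exact absurd hA0' (ne_of_gt hApos)
    have hSψ : Smu μ ψ = g / 2 + (g / J) * (A / 2 - Fint) := by
      simp only [Smu, Emu]
      rw [hgradψ, hFψ, hl2ψ]
      ring
    have hSQ : Smu μ Q ≤ g / 2 + (g / J) * (A / 2 - Fint) := by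
      rw [← hSψ]
      exact hIchar.2 ⟨ψ, ⟨hψl2, hψdiff, hψfd_mem⟩, hψexp, hψne, hIψ, rfl⟩
    have hBJ : 0 ≤ A - 2 * Fint + J := by
      rw [hJ_split]; linarith
    exact final_arith g J A Fint (Smu μ Q) (Smu μ φ) (Imu μ φ) hgpos hJg hSQ hBJ hSφ hImu
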